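/- For α > 0, β > 0 and 0 < a < 1, the a-remainder of the symmetric bilateral gamma law (difference of two i.i.d. Gamma(α, β) variables) has characteristic function ∑_{k=0}^∞ C(α+k-1, k) a^{2α} (1-a²)^k (β²/(β² + a²u²))^k, i.e. it is a Polya(α, 1-a²)-weighted mixture of symmetric bilateral Erlang laws with rate β/a. -/

import Mathlib

open Filter Topology

/-- Generalized binomial coefficient `C(α+k-1, k) = α(α+1)⋯(α+k-1)/k!`. -/
noncomputable def negBinomCoeff (α : ℝ) (k : ℕ) : ℝ :=
  (∏ j ∈ Finset.range k, (α + j)) / (Nat.factorial k : ℝ)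

lemma negBinomCoeff_zero (α : ℝ) : negBinomCoeff α 0 = 1 := by
  simp [negBinomCoeff]

lemma negBinomCoeff_pos {α : ℝ} (hα : 0 < α) (k : ℕ) : 0 < negBinomCoeff α k := by
  apply div_pos
  · exact Finset.prod_pos fun j _ => by positivity
  · exact_mod_cast Nat.factorial_pos k

lemma negBinomCoeff_rec (α : ℝ) (k : ℕ) :
    ((k : ℝ) + 1) * negBinomCoeff α (k + 1) = (α + k) * negBinomCoeff α k := by
  unfold negBinomCoeff
  rw [Finset.prod_range_succ, Nat.factorial_succ]
  have hk : (Nat.factorial k : ℝ) ≠ 0 := by exact_mod_cast (Nat.factorial_pos k).ne'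
  have hk1 : ((k : ℝ) + 1) ≠ 0 := by positivity
  push_cast
  field_simp

lemma negBinomCoeff_shift (α : ℝ) (k : ℕ) :
    (α + k) * negBinomCoeff α k = α * negBinomCoeff (α + 1) k := by
  unfold negBinomCoeff
  have h1 : (α + k) * ∏ j ∈ Finset.range k, (α + (j:ℝ))
      = α * ∏ j ∈ Finset.range k, (α + 1 + (j:ℝ)) := by
    rw [mul_comm, ← Finset.prod_range_succ (fun j => α + (j:ℝ)) k,
      Finset.prod_range_succ' (fun j => α + (j:ℝ)) k]
    rw [mul_comm α]
    congr 1
    · exact Finset.prod_congr rfl fun j _ => by push_cast; ring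
    · norm_num
  rw [← mul_div_assoc, ← mul_div_assoc, h1]

lemma ratio_tendsto (α : ℝ) :
    Tendsto (fun k : ℕ => (α + k) / ((k : ℝ) + 1)) atTop (𝓝 1) := by
  have h : ∀ k : ℕ, (α + k) / ((k : ℝ) + 1) = (α - 1) * (1 / ((k : ℝ) + 1)) + 1 := by
    intro k
    have : ((k : ℝ) + 1) ≠ 0 := by positivity
    field_simp
    ring
  simp only [h]
  have := (tendsto_one_div_add_atTop_nhds_zero_nat).const_mul (α - 1)
  simpa using this.add_const 1

lemma summable_negBinom {α : ℝ} (hα : 0 < α) {r : ℝ} (hr0 : 0 < r) (hr1 : r < 1) :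
    Summable (fun k : ℕ => negBinomCoeff α k * r ^ k) := by
  apply summable_of_ratio_test_tendsto_lt_one hr1
  · filter_upwards with k
    have := negBinomCoeff_pos hα k
    positivity
  · have h : ∀ k : ℕ, ‖negBinomCoeff α (k + 1) * r ^ (k + 1)‖ /
        ‖negBinomCoeff α k * r ^ k‖ = ((α + k) / ((k : ℝ) + 1)) * r := by
      intro k
      have hck := negBinomCoeff_pos hα k
      have hck1 := negBinomCoeff_pos hα (k + 1)
      have h1 : negBinomCoeff α (k + 1) = (α + k) * negBinomCoeff α k / ((k : ℝ) + 1) := by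
        rw [← negBinomCoeff_rec]
        field_simp
      rw [Real.norm_eq_abs, Real.norm_eq_abs, abs_of_pos (by positivity),
        abs_of_pos (by positivity), h1, pow_succ]
      have hk1 : ((k : ℝ) + 1) ≠ 0 := by positivity
      field_simp
    simp only [h]
    simpa using (ratio_tendsto α).mul_const r

lemma binomial_hasSum {α : ℝ} (hα : 0 < α) {x : ℝ} (hx0 : 0 ≤ x) (hx1 : x < 1) :
    HasSum (fun k : ℕ => negBinomCoeff α k * x ^ k) ((1 - x) ^ (-α)) := by
  set c := negBinomCoeff α with hc
  set r : ℝ := (x + 1) / 2 with hr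
  have hr0 : 0 < r := by rw [hr]; linarith
  have hxr : x < r := by rw [hr]; linarith
  have hr1 : r < 1 := by rw [hr]; linarith
  set t : Set ℝ := Metric.ball 0 r with ht
  have hxt : x ∈ t := by
    simp only [ht, Metric.mem_ball, Real.dist_eq, sub_zero]
    rw [abs_of_nonneg hx0]; exact hxr
  have h0t : (0 : ℝ) ∈ t := by simpa [ht] using hr0
  -- summable bound for the derivative series
  set u : ℕ → ℝ := fun k => c k * ((k : ℝ) * r ^ (k - 1)) with hu_def
  have hu : Summable u := by
    rw [← summable_nat_add_iff 1]
    have heq : ∀ k : ℕ, u (k + 1) = α * (negBinomCoeff (α + 1) k * r ^ k) := by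
      intro k
      simp only [hu_def, Nat.add_sub_cancel, hc]
      push_cast
      rw [show negBinomCoeff α (k+1) * (((k:ℝ) + 1) * r ^ k)
          = (((k:ℝ) + 1) * negBinomCoeff α (k+1)) * r ^ k by ring,
        negBinomCoeff_rec, negBinomCoeff_shift]
      ring
    simp only [heq]
    exact (summable_negBinom (by linarith) hr0 hr1).mul_left α
  -- the series terms and their derivatives
  set g : ℕ → ℝ → ℝ := fun k y => c k * y ^ k with hg_def
  set g' : ℕ → ℝ → ℝ := fun k y => c k * ((k : ℝ) * y ^ (k - 1)) with hg'_def
  have hg : ∀ k y, y ∈ t → HasDerivAt (g k) (g' k y) y := fun k y _ =>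
    (hasDerivAt_pow k y).const_mul (c k)
  have hg' : ∀ k y, y ∈ t → ‖g' k y‖ ≤ u k := by
    intro k y hy
    simp only [ht, Metric.mem_ball, Real.dist_eq, sub_zero] at hy
    have hck := negBinomCoeff_pos hα k
    simp only [hg'_def, hu_def, Real.norm_eq_abs, abs_mul, abs_of_pos hck,
      Nat.abs_cast]
    gcongr
    · exact (abs_of_pos hck).le
    rw [abs_pow]
    exact pow_le_pow_left₀ (abs_nonneg y) hy.le _
  have hg0 : Summable fun k => g k 0 := by
    apply summable_of_ne_finset_zero (s := ({0} : Finset ℕ))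
    intro k hk
    simp only [Finset.mem_singleton] at hk
    simp [hg_def, zero_pow hk]
  -- sum function and derivative
  set S : ℝ → ℝ := fun y => ∑' k, g k y with hS_def
  have hderiv : ∀ y ∈ t, HasDerivAt S (∑' k, g' k y) y := fun y hy =>
    hasDerivAt_tsum_of_isPreconnected hu (Metric.isOpen_ball)
      (convex_ball (0:ℝ) r).isPreconnected hg hg' h0t hg0 hy
  -- summability at each point of t
  have hsummS : ∀ y ∈ t, Summable fun k => g k y := by
    intro y hy
    simp only [ht, Metric.mem_ball, Real.dist_eq, sub_zero] at hy
    apply Summable.of_norm_bounded ((summable_negBinom hα hr0 hr1))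
    intro k
    have hck := negBinomCoeff_pos hα k
    simp only [hg_def, Real.norm_eq_abs, abs_mul, abs_of_pos hck, abs_pow]
    rw [show |c k| = c k from abs_of_pos hck]
    exact mul_le_mul_of_nonneg_left (pow_le_pow_left₀ (abs_nonneg y) hy.le k) hck.le
  have hsummD : ∀ y ∈ t, Summable fun k => g' k y := fun y hy =>
    Summable.of_norm_bounded hu fun k => hg' k y hy
  -- the ODE : (1 - y) * D y = α * S y on t
  have hODE : ∀ y ∈ t, (1 - y) * (∑' k, g' k y) = α * S y := by
    intro y hy
    have hD : HasSum (fun k => g' k y) (∑' k, g' k y) := (hsummD y hy).hasSum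
    have hS : HasSum (fun k => g k y) (S y) := (hsummS y hy).hasSum
    set D := ∑' k, g' k y with hD_def
    -- shift: HasSum (fun k => (α + k) * c k * y ^ k) D
    have hg'0 : g' 0 y = 0 := by simp [hg'_def]
    have hshift : HasSum (fun k : ℕ => (α + k) * c k * y ^ k) D := by
      have h1 : HasSum (fun k : ℕ => g' (k + 1) y) (D - ∑ i ∈ Finset.range 1, g' i y) :=
        (hasSum_nat_add_iff' 1).mpr (by simpa using hD)
      simp only [Finset.range_one, Finset.sum_singleton, hg'0, sub_zero] at h1
      convert h1 using 2 with k
      simp only [hg'_def, Nat.add_sub_cancel, hc]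
      push_cast
      rw [show negBinomCoeff α (k+1) * (((k:ℝ) + 1) * y ^ k)
          = (((k:ℝ) + 1) * negBinomCoeff α (k+1)) * y ^ k by ring, negBinomCoeff_rec]
    -- x * D as a shifted sum
    have hxD : HasSum (fun k : ℕ => (α + k) * c k * y ^ (k + 1)) (y * D) := by
      have := hshift.mul_left y
      convert this using 2 with k
      · rfl
      ring
    -- F : shifted version with F 0 = 0
    set F : ℕ → ℝ := fun k => Nat.rec 0 (fun n _ => (α + n) * c n * y ^ (n + 1)) k with hF_def
    have hF : HasSum F (y * D) := by
      rw [show y * D = y * D + ∑ i ∈ Finset.range 1, F i by simp [hF_def]]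
      exact (hasSum_nat_add_iff 1).mp (by exact hxD)
    have hdiff : HasSum (fun k => (α + k) * c k * y ^ k - F k) (D - y * D) :=
      hshift.sub hF
    have hkey : ∀ k : ℕ, (α + k) * c k * y ^ k - F k = α * (c k * y ^ k) := by
      intro k
      cases k with
      | zero => simp [hF_def, negBinomCoeff_zero, hc]
      | succ n =>
        show (α + (n+1 : ℕ)) * c (n+1) * y ^ (n+1) - (α + n) * c n * y ^ (n+1)
          = α * (c (n+1) * y ^ (n+1))
        rw [← negBinomCoeff_rec α n]
        push_cast
        ring
    simp only [hkey] at hdiff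
    have hαS : HasSum (fun k => α * (c k * y ^ k)) (α * S y) := hS.mul_left α
    have := hdiff.unique hαS
    linarith [this]
  -- h is constant on [0, x]
  set hFun : ℝ → ℝ := fun y => (1 - y) ^ α * S y with hh_def
  have hht : ∀ y ∈ t, HasDerivAt hFun 0 y := by
    intro y hy
    have hy' : |y| < r := by
      simpa [ht, Metric.mem_ball, Real.dist_eq, sub_zero] using hy
    have h1y : 0 < 1 - y := by
      have := (abs_lt.mp hy').2
      linarith
    have hpow : HasDerivAt (fun z : ℝ => (1 - z) ^ α) (-(α * (1 - y) ^ (α - 1))) y := by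
      have hinner : HasDerivAt (fun z : ℝ => 1 - z) (-1) y := by
        simpa using (hasDerivAt_id y).const_sub 1
      have houter := Real.hasDerivAt_rpow_const (x := 1 - y) (p := α) (Or.inl h1y.ne')
      have := houter.comp y hinner
      convert this using 1
      · rfl
      · rfl
      · rfl
      ring
    have hd := hpow.mul (hderiv y hy)
    have hsplit : (1 - y) ^ α = (1 - y) ^ (α - 1) * (1 - y) := by
      conv_lhs => rw [show α = (α - 1) + 1 by ring]
      rw [Real.rpow_add h1y, Real.rpow_one]
    convert hd using 1
    · rfl
    · rfl
    · rfl
    rw [hsplit]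
    have hode := hODE y hy
    linear_combination (-(1 - y) ^ (α - 1)) * hode
  have hcont : ContinuousOn hFun (Set.Icc 0 x) := by
    intro y hy
    have hyt : y ∈ t := by
      simp only [ht, Metric.mem_ball, Real.dist_eq, sub_zero]
      rw [abs_of_nonneg hy.1]
      exact lt_of_le_of_lt hy.2 hxr
    exact ((hht y hyt).continuousAt).continuousWithinAt
  have hconst : hFun x = hFun 0 := by
    have := constant_of_has_deriv_right_zero hcont (fun y hy => by
      have hyt : y ∈ t := by
        simp only [ht, Metric.mem_ball, Real.dist_eq, sub_zero]
        rw [abs_of_nonneg hy.1]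
        exact lt_of_lt_of_le (lt_of_lt_of_le hy.2 le_rfl) hxr.le
      exact (hht y hyt).hasDerivWithinAt)
    exact this x (Set.right_mem_Icc.mpr hx0)
  have hS0 : S 0 = 1 := by
    have h00 : S 0 = ∑' k, g k 0 := rfl
    rw [h00, tsum_eq_single 0 (fun k hk => by simp [hg_def, zero_pow hk])]
    simp [hg_def, hc, negBinomCoeff_zero]
  have h1x : 0 < 1 - x := by linarith
  have hSx : S x = (1 - x) ^ (-α) := by
    have hx' : (1 - x) ^ α * S x = 1 := by
      have hcc : (1 - x) ^ α * S x = (1 - (0:ℝ)) ^ α * S 0 := hconst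
      rw [hcc, hS0]
      simp [Real.one_rpow]
    have hpos : (0:ℝ) < (1 - x) ^ α := Real.rpow_pos_of_pos h1x α
    rw [Real.rpow_neg h1x.le]
    field_simp
    linear_combination hx'
  have hfin : HasSum (fun k => c k * x ^ k) (S x) := (hsummS x hxt).hasSum
  rw [hSx] at hfin
  exact hfin

/-- The a-remainder of the symmetric bilateral gamma law, with characteristic function
`((β² + a²u²)/(β² + u²))^α`, is a Polya(α, 1-a²)-weighted mixture of symmetric bilateral
Erlang laws with rate `β/a`:
`((β² + a²u²)/(β² + u²))^α = ∑_k C(α+k-1,k) a^{2α} (1-a²)^k (β²/(β² + a²u²))^k`. -/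
theorem arem_symmetric_bilateral_gamma_polya_mixture
    (α β a : ℝ) (hα : 0 < α) (hβ : 0 < β) (ha0 : 0 < a) (ha1 : a < 1) (u : ℝ) :
    HasSum
      (fun k : ℕ =>
        negBinomCoeff α k * a ^ (2 * α) * (1 - a ^ 2) ^ k *
          (β ^ 2 / (β ^ 2 + a ^ 2 * u ^ 2)) ^ k)
      (((β ^ 2 + a ^ 2 * u ^ 2) / (β ^ 2 + u ^ 2)) ^ α) := by
  have hden : (0:ℝ) < β ^ 2 + a ^ 2 * u ^ 2 := by positivity
  have hden2 : (0:ℝ) < β ^ 2 + u ^ 2 := by positivity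
  have ha2 : a ^ 2 < 1 := by nlinarith
  set x : ℝ := (1 - a ^ 2) * (β ^ 2 / (β ^ 2 + a ^ 2 * u ^ 2)) with hx_def
  have hx0 : 0 ≤ x := by
    apply mul_nonneg (by linarith) (by positivity)
  have hx1 : x < 1 := by
    rw [hx_def, ← mul_div_assoc, div_lt_one hden]
    have h1 : (0:ℝ) < a ^ 2 * β ^ 2 := by positivity
    have h2 : (0:ℝ) ≤ a ^ 2 * u ^ 2 := by positivity
    nlinarith
  have hbs := binomial_hasSum hα hx0 hx1
  have h1x : 1 - x = a ^ 2 * (β ^ 2 + u ^ 2) / (β ^ 2 + a ^ 2 * u ^ 2) := by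
    rw [hx_def]
    field_simp
    ring
  have hval : a ^ (2 * α) * (1 - x) ^ (-α)
      = ((β ^ 2 + a ^ 2 * u ^ 2) / (β ^ 2 + u ^ 2)) ^ α := by
    have h2 : a ^ (2 * α) = (a ^ 2 : ℝ) ^ α := by
      rw [← Real.rpow_natCast a 2, ← Real.rpow_mul ha0.le]
      norm_num
    rw [h1x, h2, Real.rpow_neg (by positivity), ← Real.inv_rpow (by positivity),
      ← Real.mul_rpow (by positivity) (by positivity)]
    congr 1
    rw [inv_div]
    field_simp
  have := hbs.mul_left (a ^ (2 * α))
  rw [hval] at this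
  convert this using 2 with k
  · rfl
  rw [hx_def, mul_pow]
  ring
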